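/- Let 𝔪 be a Borel probability measure on Ω×Ω that is invariant under the diagonal translation action of ℤ³_even (i.e., the map (τ₁,τ₂) ↦ (τ₁+v, τ₂+v) preserves 𝔪 for every v ∈ ℤ³_even), and let μ₁ and μ₂ be its two marginal measures on Ω (which are invariant). Suppose that for 𝔪-almost every (τ₁,τ₂), every connected component of the graph with vertex set ℤ³ and edge set τ₁ ∪ τ₂ is finite. Then s(μ₁) = s(μ₂). -/

import Mathlib

open MeasureTheory Filter

namespace Dimers

/-- Vertices of the grid graph on `ℤ³`. -/
abbrev V : Type := Fin 3 → ℤ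

/-- The `i`-th standard unit vector of `ℤ³`. -/
def unitVec (i : Fin 3) : V := fun j => if j = i then 1 else 0

/-- Grid adjacency: two vertices are adjacent iff they differ by a standard unit vector. -/
def Adj (x y : V) : Prop := ∃ i : Fin 3, y = x + unitVec i ∨ x = y + unitVec i

/-- A vertex is even if its coordinate sum is even. -/
def IsEven (x : V) : Prop := (x 0 + x 1 + x 2) % 2 = 0

instance : DecidablePred IsEven := fun x =>
  inferInstanceAs (Decidable ((x 0 + x 1 + x 2) % 2 = 0))

/-- A dimer tiling (perfect matching) of `ℤ³`, encoded by the involution sending each vertex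
to the vertex it is matched with. -/
def IsTiling (m : V → V) : Prop := (∀ x, Adj x (m x)) ∧ ∀ x, m (m x) = x

/-- `Omega` is the space of dimer tilings of `ℤ³`. -/
abbrev Omega : Type := {m : V → V // IsTiling m}

theorem isTiling_translate {m : V → V} (h : IsTiling m) (v : V) :
    IsTiling fun x => m (x - v) + v := by
  obtain ⟨h1, h2⟩ := h
  constructor
  · intro x
    show Adj x (m (x - v) + v)
    obtain ⟨i, hi | hi⟩ := h1 (x - v)
    · exact ⟨i, Or.inl (by rw [hi]; abel)⟩
    · refine ⟨i, Or.inr ?_⟩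
      rw [sub_eq_iff_eq_add] at hi
      exact hi.trans (by abel)
  · intro x
    show m (m (x - v) + v - v) + v = x
    have h3 : m (x - v) + v - v = m (x - v) := by abel
    rw [h3, h2]
    abel

/-- Translation of a tiling by the vector `v`. -/
def translate (v : V) (τ : Omega) : Omega :=
  ⟨fun x => τ.1 (x - v) + v, isTiling_translate τ.2 v⟩

/-- A measure on `Omega` is invariant if it is preserved by translation by every even vector. -/
def Invariant (μ : Measure Omega) : Prop :=
  ∀ v : V, IsEven v → Measure.map (translate v) μ = μ

/-- An invariant measure is ergodic if every Borel set invariant under all even translations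
has measure `0` or `1`. -/
def IsErgodicMeasure (μ : Measure Omega) : Prop :=
  Invariant μ ∧ ∀ A : Set Omega, MeasurableSet A →
    (∀ v : V, IsEven v → translate v ⁻¹' A = A) → μ A = 0 ∨ μ A = 1

/-- The mean current of a measure on `Omega`: the `i`-th coordinate is
`μ{τ : e_i ∈ τ} − μ{τ : −e_i ∈ τ}`. -/
noncomputable def meanCurrent (μ : Measure Omega) : Fin 3 → ℝ := fun i =>
  (μ {τ : Omega | τ.1 0 = unitVec i}).toReal - (μ {τ : Omega | τ.1 0 = -unitVec i}).toReal

/-- The mean-current octahedron `O`. -/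
def Oct : Set (Fin 3 → ℝ) := {s | |s 0| + |s 1| + |s 2| ≤ 1}

/-- The Shannon entropy `H_Λ(μ)` of the restriction of `μ` to the finite window `Λ`
(the restriction of a tiling to `Λ` records the partner of every vertex of `Λ`, i.e. all
edges with at least one endpoint in `Λ`). -/
noncomputable def boxEntropy (Λ : Finset V) (μ : Measure Omega) : ℝ :=
  ∑' σ : (↥Λ → V), Real.negMulLog (μ {τ : Omega | ∀ x : ↥Λ, τ.1 x.1 = σ x}).toReal

/-- The cube `Λ_n = ([-n,n] ∩ ℤ)³`. -/
noncomputable def cube (n : ℕ) : Finset V := Fintype.piFinset fun _ : Fin 3 => Finset.Icc (-(n : ℤ)) (n : ℤ)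

/-- The specific entropy (entropy per site) of a measure on `Omega`. -/
noncomputable def specificEntropy (μ : Measure Omega) : ℝ :=
  limsup (fun n : ℕ => boxEntropy (cube n) μ / ((cube n).card : ℝ)) atTop

/-- The mean-current entropy function `ent`. -/
noncomputable def ent (s : Fin 3 → ℝ) : ℝ :=
  sSup {h : ℝ | ∃ μ : Measure Omega, IsProbabilityMeasure μ ∧ Invariant μ ∧
    meanCurrent μ = s ∧ specificEntropy μ = h}

/-- The uniform Gibbs condition in the finite window `Λ`: any two boundary-compatible
configurations (tilings whose symmetric difference consists of edges with both endpoints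
in `Λ`) give cylinder sets of equal measure. -/
def GibbsCond (μ : Measure Omega) (Λ : Finset V) : Prop :=
  ∀ τ τ' : Omega,
    (∀ x : V, τ.1 x ≠ τ'.1 x → x ∈ Λ ∧ τ.1 x ∈ Λ ∧ τ'.1 x ∈ Λ) →
    μ {σ : Omega | ∀ x ∈ Λ, σ.1 x = τ.1 x} = μ {σ : Omega | ∀ x ∈ Λ, σ.1 x = τ'.1 x}

/-- A (uniform) Gibbs measure. -/
def IsGibbs (μ : Measure Omega) : Prop :=
  Invariant μ ∧ ∀ Λ : Finset V, GibbsCond μ Λ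

/-- The graph on `ℤ³` whose edge set is the union `τ₁ ∪ τ₂` of the two tilings. -/
def unionGraph (τ₁ τ₂ : Omega) : SimpleGraph V where
  Adj x y := x ≠ y ∧ (τ₁.1 x = y ∨ τ₂.1 x = y)
  symm := by
    constructor
    rintro x y ⟨hxy, h | h⟩
    · exact ⟨Ne.symm hxy, Or.inl (by rw [← h, τ₁.2.2])⟩
    · exact ⟨Ne.symm hxy, Or.inr (by rw [← h, τ₂.2.2])⟩
  loopless := by constructor; rintro x ⟨h, -⟩; exact h rfl

lemma measurableSet_V (s : Set V) : MeasurableSet s := by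
  have hsing : ∀ x : V, MeasurableSet ({x} : Set V) := by
    intro x
    have h : ({x} : Set V) = ⋂ j : Fin 3, (fun f : V => f j) ⁻¹' {x j} := by
      ext f
      simp [funext_iff]
    rw [h]
    exact MeasurableSet.iInter fun j =>
      (measurable_pi_apply j) (MeasurableSet.singleton _)
  have h : s = ⋃ x ∈ s, {x} := by simp
  rw [h]
  exact MeasurableSet.biUnion s.to_countable (fun x _ => hsing x)

instance : MeasurableSingletonClass V := ⟨fun x => measurableSet_V {x}⟩

lemma measurable_from_V {β : Type*} [MeasurableSpace β] (f : V → β) : Measurable f :=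
  fun _ _ => measurableSet_V _

lemma measurable_apply_comp {α : Type*} [MeasurableSpace α] {F : α → V → V}
    (hF : ∀ v : V, Measurable fun a => F a v) {g : α → V} (hg : Measurable g) :
    Measurable fun a => F a (g a) := by
  apply measurable_to_countable'
  intro y
  have h : (fun a => F a (g a)) ⁻¹' {y} = ⋃ v : V, {a | g a = v} ∩ {a | F a v = y} := by
    ext a
    constructor
    · intro ha; exact Set.mem_iUnion.2 ⟨g a, rfl, ha⟩
    · intro ha
      obtain ⟨v, hv1, hv2⟩ := Set.mem_iUnion.1 ha
      simp only [Set.mem_setOf_eq] at hv1 hv2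
      show F a (g a) ∈ ({y} : Set V)
      rw [hv1, hv2]; rfl
  rw [h]
  exact MeasurableSet.iUnion fun v =>
    (hg (measurableSet_V {v})).inter ((hF v) (measurableSet_V {y}))



/- ## basic structure lemmas -/

lemma step_cases (τ : Omega) (x : V) :
    ∃ a : Fin 3, τ.1 x = x + unitVec a ∨ τ.1 x = x - unitVec a := by
  obtain ⟨a, h | h⟩ := τ.2.1 x
  · exact ⟨a, Or.inl h⟩
  · exact ⟨a, Or.inr (eq_sub_of_add_eq h.symm)⟩

lemma coordsum_unit (a : Fin 3) : unitVec a 0 + unitVec a 1 + unitVec a 2 = 1 := by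
  fin_cases a <;> simp [unitVec]

lemma unit_coord (a j : Fin 3) : unitVec a j = 0 ∨ unitVec a j = 1 := by
  unfold unitVec
  split <;> simp

lemma isEven_step (τ : Omega) (x : V) : IsEven (τ.1 x) ↔ ¬ IsEven x := by
  have hu := coordsum_unit
  obtain ⟨a, h | h⟩ := step_cases τ x <;> rw [h] <;>
    simp only [IsEven, Pi.add_apply, Pi.sub_apply] <;>
    have := hu a <;> omega

lemma isEven_zero : IsEven (0 : V) := by simp [IsEven]

lemma isEven_neg (x : V) : IsEven (-x) ↔ IsEven x := by
  simp only [IsEven, Pi.neg_apply]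
  omega

lemma step_bound (τ : Omega) (x : V) (j : Fin 3) :
    x j - 1 ≤ τ.1 x j ∧ τ.1 x j ≤ x j + 1 := by
  obtain ⟨a, h | h⟩ := step_cases τ x <;> rw [h] <;>
    simp only [Pi.add_apply, Pi.sub_apply] <;>
    rcases unit_coord a j with h' | h' <;> omega

lemma unit_self (a : Fin 3) : unitVec a a = 1 := by simp [unitVec]

lemma tiling_ne (τ : Omega) (x : V) : τ.1 x ≠ x := by
  intro h
  have haa := unit_self
  obtain ⟨a, h' | h'⟩ := step_cases τ x <;> rw [h] at h' <;>
    have := congrFun h' a <;>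
    simp only [Pi.add_apply, Pi.sub_apply] at this <;>
    have := haa a <;> omega

/- ## the double-dimer walk -/

def Psi (p : Omega × Omega) (x : V) : V := p.2.1 (p.1.1 x)

def Phi (p : Omega × Omega) (x : V) : V := p.1.1 (p.2.1 x)

lemma Phi_Psi (p : Omega × Omega) : Function.LeftInverse (Phi p) (Psi p) := by
  intro x
  unfold Phi Psi
  rw [p.2.2.2, p.1.2.2]

lemma Psi_Phi (p : Omega × Omega) : Function.LeftInverse (Psi p) (Phi p) := by
  intro x
  unfold Phi Psi
  rw [p.1.2.2, p.2.2.2]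

lemma psiIt_eq_zero_iff (p : Omega × Omega) (k : ℕ) (x : V) :
    (Psi p)^[k] x = 0 ↔ x = (Phi p)^[k] 0 := by
  constructor
  · intro h
    have h2 := (Function.LeftInverse.iterate (Phi_Psi p) k) x
    rw [h] at h2
    exact h2.symm
  · intro h
    subst h
    exact (Function.LeftInverse.iterate (Psi_Phi p) k) 0

lemma isEven_Psi (p : Omega × Omega) (x : V) : IsEven (Psi p x) ↔ IsEven x := by
  unfold Psi
  rw [isEven_step p.2, isEven_step p.1]
  tauto

lemma isEven_Phi (p : Omega × Omega) (x : V) : IsEven (Phi p x) ↔ IsEven x := by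
  unfold Phi
  rw [isEven_step p.1, isEven_step p.2]
  tauto

lemma isEven_psiIt (p : Omega × Omega) (k : ℕ) : IsEven ((Psi p)^[k] 0) := by
  induction k with
  | zero => exact isEven_zero
  | succ k ih => rw [Function.iterate_succ_apply', isEven_Psi]; exact ih

lemma isEven_phiIt (p : Omega × Omega) (k : ℕ) : IsEven ((Phi p)^[k] 0) := by
  induction k with
  | zero => exact isEven_zero
  | succ k ih => rw [Function.iterate_succ_apply', isEven_Phi]; exact ih

lemma psi_bound (p : Omega × Omega) (x : V) (j : Fin 3) :
    x j - 2 ≤ Psi p x j ∧ Psi p x j ≤ x j + 2 := by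
  have h1 := step_bound p.1 x j
  have h2 := step_bound p.2 (p.1.1 x) j
  unfold Psi
  omega

lemma phi_bound (p : Omega × Omega) (x : V) (j : Fin 3) :
    x j - 2 ≤ Phi p x j ∧ Phi p x j ≤ x j + 2 := by
  have h1 := step_bound p.2 x j
  have h2 := step_bound p.1 (p.2.1 x) j
  unfold Phi
  omega

lemma psiIt_bound (p : Omega × Omega) (k : ℕ) (j : Fin 3) :
    -(2 * (k : ℤ)) ≤ (Psi p)^[k] 0 j ∧ (Psi p)^[k] 0 j ≤ 2 * (k : ℤ) := by
  induction k with
  | zero => simp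
  | succ k ih =>
    rw [Function.iterate_succ_apply']
    have := psi_bound p ((Psi p)^[k] 0) j
    push_cast
    omega

lemma phiIt_bound (p : Omega × Omega) (k : ℕ) (j : Fin 3) :
    -(2 * (k : ℤ)) ≤ (Phi p)^[k] 0 j ∧ (Phi p)^[k] 0 j ≤ 2 * (k : ℤ) := by
  induction k with
  | zero => simp
  | succ k ih =>
    rw [Function.iterate_succ_apply']
    have := phi_bound p ((Phi p)^[k] 0) j
    push_cast
    omega

/- ## measurability -/

lemma measurable_fst_eval (x : V) : Measurable fun p : Omega × Omega => p.1.1 x :=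
  (measurable_pi_apply x).comp (measurable_subtype_coe.comp measurable_fst)

lemma measurable_snd_eval (x : V) : Measurable fun p : Omega × Omega => p.2.1 x :=
  (measurable_pi_apply x).comp (measurable_subtype_coe.comp measurable_snd)

lemma measurable_psiIt (k : ℕ) (x : V) :
    Measurable fun p : Omega × Omega => (Psi p)^[k] x := by
  induction k with
  | zero => simp only [Function.iterate_zero, id]; exact measurable_const
  | succ k ih =>
    have h1 : Measurable fun p : Omega × Omega => p.1.1 ((Psi p)^[k] x) :=
      measurable_apply_comp (fun v => measurable_fst_eval v) ih
    have h2 : Measurable fun p : Omega × Omega => p.2.1 (p.1.1 ((Psi p)^[k] x)) :=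
      measurable_apply_comp (fun v => measurable_snd_eval v) h1
    simp only [Function.iterate_succ_apply']
    exact h2

/- ## translation equivariance -/

def T (v : V) (p : Omega × Omega) : Omega × Omega := (translate v p.1, translate v p.2)

lemma measurable_translate (v : V) : Measurable (translate v) := by
  apply Measurable.subtype_mk
  apply measurable_pi_lambda
  intro x
  exact (measurable_from_V (fun w : V => w + v)).comp
    ((measurable_pi_apply (x - v)).comp measurable_subtype_coe)

lemma measurable_T (v : V) : Measurable (T v) :=
  ((measurable_translate v).comp measurable_fst).prodMk
    ((measurable_translate v).comp measurable_snd)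

lemma translate_apply (v : V) (τ : Omega) (x : V) :
    (translate v τ).1 x = τ.1 (x - v) + v := rfl

lemma Psi_T (v : V) (p : Omega × Omega) (x : V) :
    Psi (T v p) x = Psi p (x - v) + v := by
  show (translate v p.2).1 ((translate v p.1).1 x) = _
  rw [translate_apply, translate_apply, add_sub_cancel_right]
  rfl

lemma psiIt_T (v : V) (p : Omega × Omega) (k : ℕ) (x : V) :
    (Psi (T v p))^[k] x = (Psi p)^[k] (x - v) + v := by
  induction k with
  | zero => simp
  | succ k ih =>
    rw [Function.iterate_succ_apply', Function.iterate_succ_apply', ih, Psi_T,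
      add_sub_cancel_right]


/- ## the box of even sites -/

noncomputable def box (k : ℕ) : Finset V :=
  Finset.filter (fun v => IsEven v)
    (Fintype.piFinset fun _ : Fin 3 => Finset.Icc (-(2 * (k : ℤ))) (2 * (k : ℤ)))

lemma mem_box {k : ℕ} {v : V} :
    v ∈ box k ↔ IsEven v ∧ ∀ j, -(2 * (k : ℤ)) ≤ v j ∧ v j ≤ 2 * (k : ℤ) := by
  simp only [box, Finset.mem_filter, Fintype.mem_piFinset, Finset.mem_Icc]
  tauto

lemma psiIt_mem_box (p : Omega × Omega) (k : ℕ) : (Psi p)^[k] 0 ∈ box k :=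
  mem_box.2 ⟨isEven_psiIt p k, fun j => psiIt_bound p k j⟩

lemma neg_phiIt_mem_box (p : Omega × Omega) (k : ℕ) : -((Phi p)^[k] 0) ∈ box k := by
  refine mem_box.2 ⟨(isEven_neg _).2 (isEven_phiIt p k), fun j => ?_⟩
  have := phiIt_bound p k j
  simp only [Pi.neg_apply]
  omega

lemma box_even {k : ℕ} {v : V} (hv : v ∈ box k) : IsEven v := (mem_box.1 hv).1

/- ## integrability helper -/

lemma integrable_of_bounded {m : Measure (Omega × Omega)} [IsProbabilityMeasure m]
    {f : Omega × Omega → ℝ} (hf : Measurable f) {C : ℝ} (hC : ∀ p, |f p| ≤ C) :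
    Integrable f m := by
  refine (integrable_const C).mono' hf.aestronglyMeasurable (ae_of_all _ ?_)
  intro p
  rw [Real.norm_eq_abs]
  exact hC p

/- ## the mass transport lemma -/

lemma mtp (m : Measure (Omega × Omega)) [IsProbabilityMeasure m]
    (hinv : ∀ v : V, IsEven v → Measure.map (T v) m = m)
    (k : ℕ) (f : Omega × Omega → V → ℝ) (C : ℝ) (hC : 0 ≤ C)
    (hfm : ∀ v : V, Measurable fun p => f p v)
    (hfb : ∀ p v, |f p v| ≤ C)
    (hfe : ∀ v : V, IsEven v → ∀ p x, f (T v p) (x + v) = f p x) :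
    ∫ p, f p ((Psi p)^[k] 0) ∂m = ∫ p, f p 0 ∂m := by
  set S := box k with hS
  -- measurability of summands
  have hmeas1 : ∀ v : V, Measurable fun p : Omega × Omega =>
      (if (Psi p)^[k] 0 = v then f p v else 0) := by
    intro v
    exact Measurable.ite ((measurable_psiIt k 0) (measurableSet_V {v})) (hfm v)
      measurable_const
  have hmeas2 : ∀ v : V, Measurable fun p : Omega × Omega =>
      (if (Psi p)^[k] (-v) = 0 then f p 0 else 0) := by
    intro v
    exact Measurable.ite ((measurable_psiIt k (-v)) (measurableSet_V {0})) (hfm 0)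
      measurable_const
  have hb1 : ∀ v : V, ∀ p, |(if (Psi p)^[k] 0 = v then f p v else 0)| ≤ C := by
    intro v p
    split
    · exact hfb p v
    · simpa using hC
  have hb2 : ∀ v : V, ∀ p, |(if (Psi p)^[k] (-v) = 0 then f p 0 else 0)| ≤ C := by
    intro v p
    split
    · exact hfb p 0
    · simpa using hC
  have hint1 : ∀ v ∈ S, Integrable
      (fun p => if (Psi p)^[k] 0 = v then f p v else 0) m :=
    fun v _ => integrable_of_bounded (hmeas1 v) (hb1 v)
  have hint2 : ∀ v ∈ S, Integrable
      (fun p => if (Psi p)^[k] (-v) = 0 then f p 0 else 0) m :=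
    fun v _ => integrable_of_bounded (hmeas2 v) (hb2 v)
  have key : (fun p => f p ((Psi p)^[k] 0)) =
      fun p => ∑ v ∈ S, if (Psi p)^[k] 0 = v then f p v else 0 := by
    funext p
    rw [Finset.sum_ite_eq, if_pos (psiIt_mem_box p k)]
  have key2 : (fun p => f p 0) =
      fun p => ∑ v ∈ S, if (Psi p)^[k] (-v) = 0 then f p 0 else 0 := by
    funext p
    have hcong : ∀ v ∈ S, (if (Psi p)^[k] (-v) = 0 then f p 0 else 0) =
        (if -((Phi p)^[k] 0) = v then f p 0 else 0) := by
      intro v _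
      have hiff : (Psi p)^[k] (-v) = 0 ↔ -((Phi p)^[k] 0) = v := by
        rw [psiIt_eq_zero_iff]
        constructor
        · intro h; rw [← h]; simp
        · intro h; rw [← h]; simp
      exact if_congr hiff rfl rfl
    rw [Finset.sum_congr rfl hcong, Finset.sum_ite_eq, if_pos (neg_phiIt_mem_box p k)]
  have step : ∀ v ∈ S, (∫ p, (if (Psi p)^[k] 0 = v then f p v else 0) ∂m) =
      ∫ p, (if (Psi p)^[k] (-v) = 0 then f p 0 else 0) ∂m := by
    intro v hv
    have hveven := box_even hv
    have hptw : ∀ p, (if (Psi (T v p))^[k] 0 = v then f (T v p) v else 0) =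
        (if (Psi p)^[k] (-v) = 0 then f p 0 else 0) := by
      intro p
      have hcond : (Psi (T v p))^[k] 0 = v ↔ (Psi p)^[k] (-v) = 0 := by
        rw [psiIt_T, zero_sub]
        constructor
        · intro h
          have := congrArg (fun w => w - v) h
          simpa using this
        · intro h; rw [h]; simp
      have hval : f (T v p) v = f p 0 := by
        have := hfe v hveven p 0
        rwa [zero_add] at this
      rcases Classical.em ((Psi p)^[k] (-v) = 0) with h | h
      · rw [if_pos (hcond.2 h), if_pos h, hval]
      · rw [if_neg (fun hh => h (hcond.1 hh)), if_neg h]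
    calc (∫ p, (if (Psi p)^[k] 0 = v then f p v else 0) ∂m)
        = ∫ p, (if (Psi p)^[k] 0 = v then f p v else 0) ∂(Measure.map (T v) m) := by
          rw [hinv v hveven]
      _ = ∫ p, (if (Psi (T v p))^[k] 0 = v then f (T v p) v else 0) ∂m := by
          rw [integral_map (measurable_T v).aemeasurable
            (hmeas1 v).aestronglyMeasurable]
      _ = ∫ p, (if (Psi p)^[k] (-v) = 0 then f p 0 else 0) ∂m := by
          simp only [hptw]
  calc ∫ p, f p ((Psi p)^[k] 0) ∂m
      = ∑ v ∈ S, ∫ p, (if (Psi p)^[k] 0 = v then f p v else 0) ∂m := by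
        rw [key, integral_finset_sum S hint1]
    _ = ∑ v ∈ S, ∫ p, (if (Psi p)^[k] (-v) = 0 then f p 0 else 0) ∂m :=
        Finset.sum_congr rfl step
    _ = ∫ p, f p 0 ∂m := by
        rw [← integral_finset_sum S hint2, ← key2]


lemma measurable_eval_Omega (x : V) : Measurable fun τ : Omega => τ.1 x :=
  (measurable_pi_apply x).comp measurable_subtype_coe

lemma coord_indicator (τ : Omega) (i : Fin 3) :
    ((τ.1 0 i : ℤ) : ℝ) = (if τ.1 0 = unitVec i then (1 : ℝ) else 0)
      - (if τ.1 0 = -unitVec i then (1 : ℝ) else 0) := by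
  obtain ⟨a, h | h⟩ := step_cases τ 0
  · rw [zero_add] at h
    by_cases hai : a = i
    · subst hai
      rw [h, if_pos rfl, if_neg, unit_self]
      · norm_num
      · intro hh
        have := congrFun hh a
        simp only [Pi.neg_apply, unit_self] at this
        omega
    · have hcoord : unitVec a i = 0 := by simp [unitVec, Ne.symm hai]
      have h0 : unitVec i a = 0 := by simp [unitVec, hai]
      rw [h, hcoord, if_neg, if_neg]
      · norm_num
      · intro hh
        have := congrFun hh a
        simp only [Pi.neg_apply, unit_self] at this
        omega
      · intro hh
        have := congrFun hh a
        rw [unit_self] at this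
        omega
  · rw [zero_sub] at h
    by_cases hai : a = i
    · subst hai
      rw [h, if_neg, if_pos rfl]
      · simp [unit_self]
      · intro hh
        have := congrFun hh a
        simp only [Pi.neg_apply, unit_self] at this
        omega
    · have hcoord : unitVec a i = 0 := by simp [unitVec, Ne.symm hai]
      have h0 : unitVec i a = 0 := by simp [unitVec, hai]
      rw [h, if_neg, if_neg]
      · simp [hcoord]
      · intro hh
        have := congrFun hh a
        simp only [Pi.neg_apply, unit_self] at this
        omega
      · intro hh
        have := congrFun hh a
        simp only [Pi.neg_apply, unit_self] at this
        omega

lemma current_integral (m : Measure (Omega × Omega)) [IsProbabilityMeasure m]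
    (g : Omega × Omega → Omega) (hg : Measurable g) (i : Fin 3) :
    (m {p | (g p).1 0 = unitVec i}).toReal - (m {p | (g p).1 0 = -unitVec i}).toReal
      = ∫ p, (((g p).1 0 i : ℤ) : ℝ) ∂m := by
  set A : Set (Omega × Omega) := {p | (g p).1 0 = unitVec i} with hA
  set B : Set (Omega × Omega) := {p | (g p).1 0 = -unitVec i} with hB
  have hAm : MeasurableSet A :=
    hg ((measurable_eval_Omega 0) (measurableSet_V {unitVec i}))
  have hBm : MeasurableSet B :=
    hg ((measurable_eval_Omega 0) (measurableSet_V {-unitVec i}))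
  have hfun : (fun p => (((g p).1 0 i : ℤ) : ℝ)) =
      fun p => A.indicator 1 p - B.indicator 1 p := by
    funext p
    rw [Set.indicator_apply, Set.indicator_apply]
    simpa [hA, hB] using coord_indicator (g p) i
  have hI1 : Integrable (fun p => A.indicator (1 : Omega × Omega → ℝ) p) m :=
    (integrable_const (1:ℝ)).indicator hAm
  have hI2 : Integrable (fun p => B.indicator (1 : Omega × Omega → ℝ) p) m :=
    (integrable_const (1:ℝ)).indicator hBm
  rw [hfun, integral_sub hI1 hI2, integral_indicator_one hAm, integral_indicator_one hBm]
  rfl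

/- ## zero mean displacement of the double-dimer walk -/

lemma reachable_psi (p : Omega × Omega) (y : V) :
    (unionGraph p.1 p.2).Reachable y (Psi p y) := by
  have h1 : (unionGraph p.1 p.2).Adj y (p.1.1 y) :=
    ⟨(tiling_ne p.1 y).symm, Or.inl rfl⟩
  have h2 : (unionGraph p.1 p.2).Adj (p.1.1 y) (p.2.1 (p.1.1 y)) :=
    ⟨(tiling_ne p.2 (p.1.1 y)).symm, Or.inr rfl⟩
  exact h1.reachable.trans h2.reachable

lemma reachable_psiIt (p : Omega × Omega) (n : ℕ) :
    (unionGraph p.1 p.2).Reachable 0 ((Psi p)^[n] 0) := by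
  induction n with
  | zero => exact SimpleGraph.Reachable.refl 0
  | succ n ih =>
    rw [Function.iterate_succ_apply']
    exact ih.trans (reachable_psi p _)

lemma psi_mean_zero (m : Measure (Omega × Omega)) [IsProbabilityMeasure m]
    (hinv : ∀ v : V, IsEven v → Measure.map (T v) m = m)
    (hfin : ∀ᵐ p ∂m, ∀ x : V, {y : V | (unionGraph p.1 p.2).Reachable x y}.Finite)
    (i : Fin 3) :
    ∫ p, ((Psi p 0 i : ℤ) : ℝ) ∂m = 0 := by
  set c : ℝ := ∫ p, ((Psi p 0 i : ℤ) : ℝ) ∂m with hc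
  set F : ℕ → Omega × Omega → ℝ := fun n p => (((Psi p)^[n] 0 i : ℤ) : ℝ) with hF
  -- measurability & integrability of F n
  have hFmeas : ∀ n, Measurable (F n) := fun n =>
    (measurable_from_V fun w : V => ((w i : ℤ) : ℝ)).comp (measurable_psiIt n 0)
  have hFbound : ∀ n p, |F n p| ≤ 2 * n := by
    intro n p
    have hb := psiIt_bound p n i
    have h1 : ((-(2 * (n:ℤ)) : ℤ) : ℝ) ≤ (((Psi p)^[n] 0 i : ℤ) : ℝ) := Int.cast_le.2 hb.1
    have h2 : (((Psi p)^[n] 0 i : ℤ) : ℝ) ≤ ((2 * (n:ℤ) : ℤ) : ℝ) := Int.cast_le.2 hb.2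
    push_cast at h1 h2
    show |(((Psi p)^[n] 0 i : ℤ) : ℝ)| ≤ 2 * n
    rw [abs_le]
    exact ⟨by linarith, h2⟩
  have hFint : ∀ n, Integrable (F n) m := fun n =>
    integrable_of_bounded (hFmeas n) (hFbound n)
  -- mass transport: each increment has mean c
  have hstep : ∀ k : ℕ, ∫ p, (F (k + 1) p - F k p) ∂m = c := by
    intro k
    set f : Omega × Omega → V → ℝ := fun p x => ((Psi p x i - x i : ℤ) : ℝ) with hf
    have hfm : ∀ v : V, Measurable fun p => f p v := by
      intro v
      have h1 : Measurable fun p : Omega × Omega => Psi p v :=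
        measurable_apply_comp (fun w => measurable_snd_eval w) (measurable_fst_eval v)
      exact (measurable_from_V fun w : V => ((w i - v i : ℤ) : ℝ)).comp h1
    have hfb : ∀ p v, |f p v| ≤ 2 := by
      intro p v
      have hb := psi_bound p v i
      have habs : |Psi p v i - v i| ≤ (2:ℤ) := by rw [abs_le]; omega
      show |((Psi p v i - v i : ℤ) : ℝ)| ≤ 2
      rw [← Int.cast_abs]
      exact_mod_cast habs
    have hfe : ∀ v : V, IsEven v → ∀ p x, f (T v p) (x + v) = f p x := by
      intro v _ p x
      have h1 : Psi (T v p) (x + v) = Psi p x + v := by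
        rw [Psi_T, add_sub_cancel_right]
      rw [hf]
      simp only [h1, Pi.add_apply]
      push_cast
      ring
    have hmtp := mtp m hinv k f 2 (by norm_num) hfm hfb hfe
    have hL : (fun p => f p ((Psi p)^[k] 0)) = fun p => F (k + 1) p - F k p := by
      funext p
      rw [hf, hF]
      simp only [Function.iterate_succ_apply']
      push_cast
      ring
    have hR : (fun p => f p 0) = fun p => ((Psi p 0 i : ℤ) : ℝ) := by
      funext p
      rw [hf]
      norm_num
    rw [hL, hR] at hmtp
    rw [hmtp, hc]
  -- hence the mean of F n is n * c
  have hmean : ∀ n : ℕ, ∫ p, F n p ∂m = n * c := by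
    intro n
    induction n with
    | zero =>
      have : F 0 = fun _ => (0 : ℝ) := by
        funext p
        rw [hF]
        simp
      rw [this]
      simp
    | succ n ih =>
      have hsub := integral_sub (hFint (n + 1)) (hFint n)
      have : ∫ p, (F (n + 1) p - F n p) ∂m = ∫ p, F (n+1) p ∂m - ∫ p, F n p ∂m := hsub
      rw [hstep n, ih] at this
      push_cast
      linarith
  -- dominated convergence for F n / n
  set G : ℕ → Omega × Omega → ℝ := fun n p => F n p / n with hG
  have hGbound : ∀ n p, ‖G n p‖ ≤ 2 := by
    intro n p
    rcases Nat.eq_zero_or_pos n with h0 | hpos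
    · subst h0
      show ‖F 0 p / ((0:ℕ):ℝ)‖ ≤ 2
      norm_num
    · show ‖F n p / n‖ ≤ 2
      rw [Real.norm_eq_abs, abs_div, abs_of_nonneg (by positivity : (0:ℝ) ≤ (n:ℝ))]
      rw [div_le_iff₀ (by positivity)]
      calc |F n p| ≤ 2 * n := hFbound n p
        _ = 2 * (n:ℝ) := by norm_num
  have hGlim : ∀ᵐ p ∂m, Tendsto (fun n => G n p) atTop (nhds 0) := by
    filter_upwards [hfin] with p hp
    have hO : {y : V | (unionGraph p.1 p.2).Reachable 0 y}.Finite := hp 0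
    set Of : Finset V := hO.toFinset with hOf
    set M : ℝ := ∑ y ∈ Of, |((y i : ℤ) : ℝ)| with hM
    have hMle : ∀ n : ℕ, |F n p| ≤ M := by
      intro n
      have hmem : (Psi p)^[n] 0 ∈ Of := by
        rw [hOf, Set.Finite.mem_toFinset]
        exact reachable_psiIt p n
      exact Finset.single_le_sum (f := fun y : V => |((y i : ℤ) : ℝ)|)
        (fun y _ => abs_nonneg _) hmem
    refine squeeze_zero_norm (a := fun n : ℕ => M / n) ?_ ?_
    · intro n
      rcases Nat.eq_zero_or_pos n with h0 | hpos
      · subst h0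
        simp only [hG, Nat.cast_zero, div_zero, norm_zero]
        exact le_refl _
      · show ‖F n p / n‖ ≤ M / n
        rw [Real.norm_eq_abs, abs_div,
          abs_of_nonneg (by positivity : (0:ℝ) ≤ (n:ℝ))]
        gcongr
        exact hMle n
    · exact tendsto_const_div_atTop_nhds_zero_nat M
  have hDCT : Tendsto (fun n => ∫ p, G n p ∂m) atTop (nhds (∫ _p, (0:ℝ) ∂m)) := by
    apply tendsto_integral_of_dominated_convergence (fun _ => (2:ℝ))
    · intro n
      exact ((hFmeas n).div_const _).aestronglyMeasurable
    · exact integrable_const 2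
    · intro n
      exact ae_of_all _ (hGbound n)
    · exact hGlim
  rw [integral_zero] at hDCT
  have hGeq : ∀ n : ℕ, 1 ≤ n → ∫ p, G n p ∂m = c := by
    intro n hn
    have hn' : ((n:ℕ):ℝ) ≠ 0 := Nat.cast_ne_zero.2 (by omega)
    have h : ∫ p, G n p ∂m = (∫ p, F n p ∂m) / n := integral_div _ _
    rw [h, hmean n, mul_comm, mul_div_assoc, div_self hn', mul_one]
  have hEv : (fun n => ∫ p, G n p ∂m) =ᶠ[atTop] fun _ => c :=
    eventually_atTop.2 ⟨1, hGeq⟩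
  have := tendsto_nhds_unique (hDCT.congr' hEv) tendsto_const_nhds
  rw [hc] at this ⊢
  exact this.symm



/-- **Couplings with finite double-dimer components have equal marginal mean currents.**
If `𝔪` is a probability measure on `Omega × Omega` invariant under the diagonal translation
action of the even lattice, and for `𝔪`-a.e. `(τ₁,τ₂)` every connected component of the
graph with edge set `τ₁ ∪ τ₂` is finite, then the two marginals have the same mean
current. -/
theorem statement8 (m : Measure (Omega × Omega)) (hprob : IsProbabilityMeasure m)
    (hinv : ∀ v : V, IsEven v →
      Measure.map (fun p : Omega × Omega => (translate v p.1, translate v p.2)) m = m)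
    (hfin : ∀ᵐ p ∂m, ∀ x : V, {y : V | (unionGraph p.1 p.2).Reachable x y}.Finite) :
    meanCurrent (m.map Prod.fst) = meanCurrent (m.map Prod.snd) := by
  have hT : ∀ v : V, IsEven v → Measure.map (T v) m = m := fun v hv => hinv v hv
  funext i
  have hA : MeasurableSet {τ : Omega | τ.1 0 = unitVec i} :=
    (measurable_eval_Omega 0) (measurableSet_V {unitVec i})
  have hB : MeasurableSet {τ : Omega | τ.1 0 = -unitVec i} :=
    (measurable_eval_Omega 0) (measurableSet_V {-unitVec i})
  have e1 : meanCurrent (m.map Prod.fst) i = ∫ p, ((p.1.1 0 i : ℤ) : ℝ) ∂m := by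
    show (Measure.map Prod.fst m {τ : Omega | τ.1 0 = unitVec i}).toReal
        - (Measure.map Prod.fst m {τ : Omega | τ.1 0 = -unitVec i}).toReal = _
    rw [Measure.map_apply measurable_fst hA, Measure.map_apply measurable_fst hB]
    exact current_integral m Prod.fst measurable_fst i
  have e2 : meanCurrent (m.map Prod.snd) i = ∫ p, ((p.2.1 0 i : ℤ) : ℝ) ∂m := by
    show (Measure.map Prod.snd m {τ : Omega | τ.1 0 = unitVec i}).toReal
        - (Measure.map Prod.snd m {τ : Omega | τ.1 0 = -unitVec i}).toReal = _
    rw [Measure.map_apply measurable_snd hA, Measure.map_apply measurable_snd hB]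
    exact current_integral m Prod.snd measurable_snd i
  -- integrable building blocks
  have h0V : ∀ j : Fin 3, (0 : V) j = 0 := fun _ => rfl
  have humeas : Measurable fun p : Omega × Omega => ((p.1.1 0 i : ℤ) : ℝ) :=
    (measurable_from_V fun w : V => ((w i : ℤ) : ℝ)).comp (measurable_fst_eval 0)
  have hubound : ∀ p : Omega × Omega, |((p.1.1 0 i : ℤ) : ℝ)| ≤ 1 := by
    intro p
    have hb := step_bound p.1 0 i
    rw [h0V i] at hb
    have habs : |p.1.1 0 i| ≤ (1:ℤ) := by rw [abs_le]; omega
    rw [← Int.cast_abs]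
    exact_mod_cast habs
  have huint : Integrable (fun p : Omega × Omega => ((p.1.1 0 i : ℤ) : ℝ)) m :=
    integrable_of_bounded humeas hubound
  have hpmeas : Measurable fun p : Omega × Omega => ((Psi p 0 i : ℤ) : ℝ) :=
    (measurable_from_V fun w : V => ((w i : ℤ) : ℝ)).comp
      (measurable_apply_comp (fun w => measurable_snd_eval w) (measurable_fst_eval 0))
  have hpbound : ∀ p : Omega × Omega, |((Psi p 0 i : ℤ) : ℝ)| ≤ 2 := by
    intro p
    have hb := psi_bound p 0 i
    rw [h0V i] at hb
    have habs : |Psi p 0 i| ≤ (2:ℤ) := by rw [abs_le]; omega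
    rw [← Int.cast_abs]
    exact_mod_cast habs
  have hpint : Integrable (fun p : Omega × Omega => ((Psi p 0 i : ℤ) : ℝ)) m :=
    integrable_of_bounded hpmeas hpbound
  -- the mass transport identity at k = 1
  have hmid : (∫ p, ((p.1.1 0 i : ℤ) : ℝ) ∂m) - ∫ p, ((Psi p 0 i : ℤ) : ℝ) ∂m
      = ∫ p, ((p.2.1 0 i : ℤ) : ℝ) ∂m := by
    set f : Omega × Omega → V → ℝ := fun p x => ((p.2.1 x i - x i : ℤ) : ℝ) with hf
    have hfm : ∀ v : V, Measurable fun p => f p v := fun v =>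
      (measurable_from_V fun w : V => ((w i - v i : ℤ) : ℝ)).comp (measurable_snd_eval v)
    have hfb : ∀ p v, |f p v| ≤ 1 := by
      intro p v
      have hb := step_bound p.2 v i
      have habs : |p.2.1 v i - v i| ≤ (1:ℤ) := by rw [abs_le]; omega
      show |((p.2.1 v i - v i : ℤ) : ℝ)| ≤ 1
      rw [← Int.cast_abs]
      exact_mod_cast habs
    have hfe : ∀ v : V, IsEven v → ∀ p x, f (T v p) (x + v) = f p x := by
      intro v _ p x
      show (((translate v p.2).1 (x + v) i - (x + v) i : ℤ) : ℝ)
          = ((p.2.1 x i - x i : ℤ) : ℝ)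
      rw [translate_apply, add_sub_cancel_right]
      simp only [Pi.add_apply]
      push_cast
      ring
    have hmtp := mtp m hT 1 f 1 one_pos.le hfm hfb hfe
    have hL : (fun p => f p ((Psi p)^[1] 0)) =
        fun p => ((p.1.1 0 i : ℤ) : ℝ) - ((Psi p 0 i : ℤ) : ℝ) := by
      funext p
      have hinvol : p.2.1 (Psi p 0) = p.1.1 0 := p.2.2.2 (p.1.1 0)
      show ((p.2.1 ((Psi p)^[1] 0) i - ((Psi p)^[1] 0) i : ℤ) : ℝ) = _
      rw [Function.iterate_one, hinvol]
      push_cast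
      ring
    have hR : (fun p => f p 0) = fun p => ((p.2.1 0 i : ℤ) : ℝ) := by
      funext p
      show ((p.2.1 0 i - (0:V) i : ℤ) : ℝ) = _
      rw [h0V i]
      push_cast
      ring
    rw [hL, hR] at hmtp
    rw [← hmtp, integral_sub huint hpint]
  have hz := psi_mean_zero m hT hfin i
  rw [e1, e2]
  rw [hz] at hmid
  linarith

end Dimers
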